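/- Let (Ω, 𝒜, μ) be a probability space, n ∈ ℕ, and x ∈ ℝ. Then the supremum, over all filtrations (ℱ_k) on Ω and all real-valued martingales (M_k) with respect to (ℱ_k) and μ with M_0 = 0 almost surely and |M_{k+1} − M_k| ≤ 1 almost surely for all k, of μ{ω : ∃ k with 0 ≤ k ≤ n and M_k(ω) ≥ x} is equal to the supremum over the same class of μ{ω : M_n(ω) ≥ x}. -/

import Mathlib

open MeasureTheory

theorem martingale_stoppedProcess' {Ω : Type*} {mΩ : MeasurableSpace Ω}
    {μ : Measure Ω} [IsFiniteMeasure μ] {𝒢 : Filtration ℕ mΩ} {f : ℕ → Ω → ℝ} {τ : Ω → WithTop ℕ}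
    (h : Martingale f 𝒢 μ) (hτ : IsStoppingTime 𝒢 τ) :
    Martingale (MeasureTheory.stoppedProcess f τ) 𝒢 μ := by
  rw [martingale_iff]
  refine ⟨?_, h.submartingale.stoppedProcess hτ⟩
  have h2 := h.neg.submartingale.stoppedProcess hτ
  have heq : MeasureTheory.stoppedProcess (-f) τ = -(MeasureTheory.stoppedProcess f τ) := by
    funext i ω; simp [MeasureTheory.stoppedProcess]
  rw [heq] at h2
  simpa using h2.neg

/-- on a fixed probability space, the supremum over all bounded-difference
martingales starting at `0` of the probability of visiting `[x, ∞)` within `n` steps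
equals the supremum over the same class of the tail probability `μ{M_n ≥ x}`. -/
theorem iSup_max_eq_iSup_tail_martingale
    {Ω : Type*} {mΩ : MeasurableSpace Ω} (μ : Measure Ω) [IsProbabilityMeasure μ]
    (n : ℕ) (x : ℝ) :
    (⨆ p : {p : Filtration ℕ mΩ × (ℕ → Ω → ℝ) //
        Martingale p.2 p.1 μ ∧ (∀ᵐ ω ∂μ, p.2 0 ω = 0) ∧
        ∀ k : ℕ, ∀ᵐ ω ∂μ, |p.2 (k + 1) ω - p.2 k ω| ≤ 1},
      μ {ω | ∃ k ≤ n, x ≤ p.val.2 k ω}) =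
    (⨆ p : {p : Filtration ℕ mΩ × (ℕ → Ω → ℝ) //
        Martingale p.2 p.1 μ ∧ (∀ᵐ ω ∂μ, p.2 0 ω = 0) ∧
        ∀ k : ℕ, ∀ᵐ ω ∂μ, |p.2 (k + 1) ω - p.2 k ω| ≤ 1},
      μ {ω | x ≤ p.val.2 n ω}) := by
  apply le_antisymm
  · -- use stopping
    refine iSup_le fun p => ?_
    obtain ⟨⟨ℱ, M⟩, hmart, h0, hdiff⟩ := p
    set τ : Ω → ℕ := fun ω => hittingBtwn M (Set.Ici x) 0 n ω with hτdef
    have hτ : IsStoppingTime ℱ (fun ω => WithTop.some (τ ω)) := hittingBtwn_isStoppingTime hmart.stronglyAdapted.adapted measurableSet_Ici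
    set N := MeasureTheory.stoppedProcess M (fun ω => WithTop.some (τ ω)) with hNdef
    have hNmart : Martingale N ℱ μ := martingale_stoppedProcess' hmart hτ
    have hN0 : ∀ᵐ ω ∂μ, N 0 ω = 0 := by
      filter_upwards [h0] with ω h
      simpa [hNdef, MeasureTheory.stoppedProcess] using h
    have hNdiff : ∀ k : ℕ, ∀ᵐ ω ∂μ, |N (k + 1) ω - N k ω| ≤ 1 := by
      intro k
      filter_upwards [hdiff k] with ω h
      simp only [hNdef, MeasureTheory.stoppedProcess]
      rcases le_or_gt (τ ω) k with hk | hk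
      · rw [min_eq_right (WithTop.coe_le_coe.2 hk),
          min_eq_right (WithTop.coe_le_coe.2 (hk.trans (Nat.le_succ k)))]
        simp
      · rw [min_eq_left (WithTop.coe_le_coe.2 hk), min_eq_left (WithTop.coe_le_coe.2 hk.le)]
        exact h
    refine le_trans ?_ (le_iSup (fun p : {p : Filtration ℕ mΩ × (ℕ → Ω → ℝ) //
        Martingale p.2 p.1 μ ∧ (∀ᵐ ω ∂μ, p.2 0 ω = 0) ∧
        ∀ k : ℕ, ∀ᵐ ω ∂μ, |p.2 (k + 1) ω - p.2 k ω| ≤ 1} =>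
        μ {ω | x ≤ p.val.2 n ω}) ⟨⟨ℱ, N⟩, hNmart, hN0, hNdiff⟩)
    apply measure_mono
    intro ω hω
    obtain ⟨k, hk, hx⟩ := hω
    have hex : ∃ j ∈ Set.Icc 0 n, M j ω ∈ Set.Ici x := ⟨k, ⟨Nat.zero_le k, hk⟩, hx⟩
    have hmem : M (τ ω) ω ∈ Set.Ici x := hittingBtwn_mem_set hex
    have hτle : τ ω ≤ n := hittingBtwn_le ω
    show x ≤ N n ω
    simp only [hNdef, MeasureTheory.stoppedProcess, min_eq_right (WithTop.coe_le_coe.2 hτle)]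
    exact hmem
  · refine iSup_mono fun p => measure_mono fun ω hω => ⟨n, le_refl n, hω⟩
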